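/- Let X be a metric space, and for each k ∈ ℤ let K_k ⊆ X be a nonempty compact set and h_k : X → X a continuous map with h_k(K_k) ⊆ K_{k+1}. Then there exists a bi-infinite sequence {z_k : k ∈ ℤ} with z_k ∈ K_k and z_{k+1} = h_k(z_k) for all k ∈ ℤ. -/

import Mathlib

/-- Auxiliary: a forward orbit starting at index `a`, lying in the sets `K`. -/
lemma exists_forward_orbit {X : Type*} [MetricSpace X]
    (K : ℤ → Set X) (h : ℤ → X → X)
    (hKne : ∀ k : ℤ, (K k).Nonempty)
    (hmaps : ∀ k : ℤ, h k '' K k ⊆ K (k + 1)) (a : ℤ) :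
    ∃ z : ℤ → X, (∀ k : ℤ, z k ∈ K k) ∧ ∀ k : ℤ, a ≤ k → z (k + 1) = h k (z k) := by
  -- iterate forward from a point of `K a`
  let f : ℕ → X := fun m => Nat.rec (hKne a).some (fun m x => h (a + m) x) m
  have hf0 : f 0 = (hKne a).some := rfl
  have hfs : ∀ m : ℕ, f (m + 1) = h (a + m) (f m) := fun m => rfl
  have hfK : ∀ m : ℕ, f m ∈ K (a + m) := by
    intro m
    induction m with
    | zero => simpa [hf0] using (hKne a).some_mem
    | succ m ih =>
        rw [hfs]
        have := hmaps (a + m) ⟨f m, ih, rfl⟩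
        have : f (m+1) ∈ K (a + m + 1) := by rw [hfs]; exact this
        convert this using 2
        push_cast; ring
  refine ⟨fun k => if a ≤ k then f (k - a).toNat else (hKne k).some, ?_, ?_⟩
  · intro k
    by_cases hk : a ≤ k
    · simp only [hk, if_true]
      have := hfK (k - a).toNat
      have hcast : a + ((k - a).toNat : ℤ) = k := by omega
      rwa [hcast] at this
    · simp only [hk, if_false]
      exact (hKne k).some_mem
  · intro k hk
    have hk1 : a ≤ k + 1 := by omega
    simp only [hk, hk1, if_true]
    have hnat : (k + 1 - a).toNat = (k - a).toNat + 1 := by omega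
    rw [hnat, hfs]
    congr 1
    omega

/-- a bi-infinite orbit of a ℤ-indexed family of continuous maps passing
through prescribed nonempty compact sets exists. -/
theorem exists_biinfinite_orbit_through_compacts {X : Type*} [MetricSpace X]
    (K : ℤ → Set X) (h : ℤ → X → X)
    (hKne : ∀ k : ℤ, (K k).Nonempty) (hKcomp : ∀ k : ℤ, IsCompact (K k))
    (hcont : ∀ k : ℤ, Continuous (h k))
    (hmaps : ∀ k : ℤ, h k '' K k ⊆ K (k + 1)) :
    ∃ z : ℤ → X, (∀ k : ℤ, z k ∈ K k) ∧ ∀ k : ℤ, z (k + 1) = h k (z k) := by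
  set S : Set (ℤ → X) := Set.univ.pi K with hS
  have hScomp : IsCompact S := isCompact_univ_pi fun k => hKcomp k
  set C : ℕ → Set (ℤ → X) :=
    fun n => S ∩ ⋂ (k : ℤ) (_ : -(n : ℤ) ≤ k), {z | z (k + 1) = h k (z k)} with hC
  have hCclosed : ∀ n, IsClosed (C n) := by
    intro n
    refine (isClosed_set_pi fun k _ => (hKcomp k).isClosed).inter ?_
    refine isClosed_iInter fun k => isClosed_iInter fun _ => ?_
    exact isClosed_eq (continuous_apply (k + 1)) ((hcont k).comp (continuous_apply k))
  have hCcomp : ∀ n, IsCompact (C n) := fun n =>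
    hScomp.inter_right (isClosed_iInter fun k => isClosed_iInter fun _ =>
      isClosed_eq (continuous_apply (k + 1)) ((hcont k).comp (continuous_apply k)))
  have hCne : ∀ n, (C n).Nonempty := by
    intro n
    obtain ⟨z, hz1, hz2⟩ := exists_forward_orbit K h hKne hmaps (-(n : ℤ))
    exact ⟨z, fun k _ => hz1 k, Set.mem_iInter₂.2 fun k hk => hz2 k hk⟩
  have hmono : ∀ m n : ℕ, m ≤ n → C n ⊆ C m := by
    intro m n hmn z hz
    refine ⟨hz.1, Set.mem_iInter₂.2 fun k hk => ?_⟩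
    exact Set.mem_iInter₂.1 hz.2 k (by omega)
  have hdir : Directed (· ⊇ ·) C := fun m n =>
    ⟨max m n, hmono m _ (le_max_left m n), hmono n _ (le_max_right m n)⟩
  obtain ⟨z, hz⟩ := IsCompact.nonempty_iInter_of_directed_nonempty_isCompact_isClosed
    C hdir hCne hCcomp hCclosed
  have hz' : ∀ n : ℕ, z ∈ C n := fun n => Set.mem_iInter.1 hz n
  refine ⟨z, fun k => (hz' 0).1 k (Set.mem_univ k), fun k => ?_⟩
  obtain ⟨n, hn⟩ : ∃ n : ℕ, -(n : ℤ) ≤ k := ⟨k.natAbs, by omega⟩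
  exact Set.mem_iInter₂.1 (hz' n).2 k hn
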